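/- For every ε > 0 there exists N such that for all n ≥ N, the set O_n = {(a/n, b/n) mod 1 : a, b, n ∈ Z, gcd(a,b,n) = 1} is ε-dense in the torus T² = R²/Z². -/

import Mathlib

open Finset

/-- Sum of 1/p² over a finset of distinct naturals ≥ 2 is at most 1 - 1/(card+1). -/
lemma sum_inv_sq_le : ∀ (k : ℕ) (F : Finset ℕ), F.card = k → (∀ p ∈ F, 2 ≤ p) →
    ∑ p ∈ F, (1:ℝ)/(p:ℝ)^2 ≤ 1 - 1/(k + 1) := by
  intro k
  induction k using Nat.strong_induction_on with
  | _ k ih =>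
    intro F hcard hF
    rcases F.eq_empty_or_nonempty with rfl | hne
    · simp at hcard
      subst hcard
      simp
    · have hk : 1 ≤ k := by
        rw [← hcard]; exact Finset.card_pos.2 hne
      set M := F.max' hne with hMdef
      have hM : M ∈ F := F.max'_mem hne
      have hM2 : 2 ≤ M := hF M hM
      have hsub : F ⊆ Finset.Icc 2 M := fun p hp =>
        Finset.mem_Icc.2 ⟨hF p hp, F.le_max' p hp⟩
      have hcard_le : k ≤ M - 1 := by
        have := Finset.card_le_card hsub
        rw [hcard, Nat.card_Icc] at this
        omega
      have hkM : k + 1 ≤ M := by omega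
      have herase : (F.erase M).card = k - 1 := by rw [Finset.card_erase_of_mem hM, hcard]
      have hih := ih (k-1) (by omega) (F.erase M) herase
        (fun p hp => hF p (Finset.mem_of_mem_erase hp))
      have hsplit := Finset.sum_erase_add F (fun p => (1:ℝ)/(p:ℝ)^2) hM
      rw [← hsplit]
      have hcast : ((k - 1 : ℕ) : ℝ) = (k : ℝ) - 1 := by
        push_cast [Nat.cast_sub hk]; ring
      rw [hcast] at hih
      have hMR : (k:ℝ) + 1 ≤ (M:ℝ) := by exact_mod_cast hkM
      have hkR : (1:ℝ) ≤ (k:ℝ) := by exact_mod_cast hk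
      have hMpos : (0:ℝ) < M := by positivity
      have h1 : (1:ℝ)/(M:ℝ)^2 ≤ 1/((k:ℝ)*((k:ℝ)+1)) := by
        apply div_le_div_of_nonneg_left one_pos.le (by positivity)
        nlinarith
      have h2 : (1:ℝ)/((k:ℝ)*((k:ℝ)+1)) = 1/(k:ℝ) - 1/((k:ℝ)+1) := by
        field_simp
        ring
      have h3 : (k:ℝ) - 1 + 1 = (k:ℝ) := by ring
      rw [h3] at hih
      linarith

lemma count_residue (K p : ℕ) (hp : 0 < p) (A : ℤ)
    [DecidablePred fun i : ℕ => (p:ℤ) ∣ A + (i:ℤ)] :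
    ((Finset.range K).filter (fun i : ℕ => (p:ℤ) ∣ A + (i:ℤ))).card ≤ K/p + 1 := by
  have : ((Finset.range K).filter (fun i : ℕ => (p:ℤ) ∣ A + (i:ℤ))).card
      ≤ (Finset.range (K/p + 1)).card := by
    apply Finset.card_le_card_of_injOn (fun i => i / p)
    · intro i hi
      simp only [Finset.coe_filter, Finset.coe_range, Set.mem_setOf_eq, Set.mem_Iio, Finset.mem_coe, Finset.mem_filter, Finset.mem_range] at hi ⊢
      have := Nat.div_le_div_right (c := p) hi.1.le
      omega
    · intro i hi j hj hij
      simp only [Finset.mem_coe, Finset.mem_filter, Finset.mem_range] at hi hj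
      simp only at hij
      have hd : (p:ℤ) ∣ ((j:ℤ) - i) := by
        have := dvd_sub hj.2 hi.2
        simpa using this
      have hme : (i:ℤ) ≡ j [ZMOD (p:ℤ)] := Int.modEq_iff_dvd.mpr hd
      have hmod : i % p = j % p := by
        have h1 : ((i % p : ℕ) : ℤ) = ((j % p : ℕ) : ℤ) := by push_cast; exact hme
        exact_mod_cast h1
      calc i = p * (i/p) + i % p := (Nat.div_add_mod i p).symm
        _ = p * (j/p) + j % p := by rw [hij, hmod]
        _ = j := Nat.div_add_mod j p
  simpa using this

noncomputable def KK (n : ℕ) : ℕ := 2 * (n.primeFactors.card + 1)^2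

lemma exists_good (n : ℕ) (hn : 1 ≤ n) (A B : ℤ) :
    ∃ i j : ℕ, i < KK n ∧ j < KK n ∧
      Int.gcd (Int.gcd (A + (i:ℤ)) (B + (j:ℤ))) (n:ℤ) = 1 := by
  classical
  by_contra hcon
  push_neg at hcon
  set K := KK n with hKdef
  set PF := n.primeFactors with hPF
  set ω := PF.card with hω
  have hn0 : n ≠ 0 := by omega
  -- every pair in the box is bad
  have hbad : ∀ q ∈ (Finset.range K) ×ˢ (Finset.range K),
      ∃ p ∈ PF, (p:ℤ) ∣ A + (q.1:ℤ) ∧ (p:ℤ) ∣ B + (q.2:ℤ) := by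
    rintro ⟨i, j⟩ hq
    simp only [Finset.mem_product, Finset.mem_range] at hq
    set g := Int.gcd (↑(Int.gcd (A + (i:ℤ)) (B + (j:ℤ)))) (n:ℤ) with hg
    have hg1 : g ≠ 1 := hcon i j hq.1 hq.2
    have hgn : g ∣ n := by
      have h : (g:ℤ) ∣ (n:ℤ) := Int.gcd_dvd_right _ _
      exact_mod_cast h
    obtain ⟨p, hp, hpg⟩ := Nat.exists_prime_and_dvd hg1
    have hpPF : p ∈ PF := Nat.mem_primeFactors.2 ⟨hp, hpg.trans hgn, hn0⟩
    have hginner : (g:ℤ) ∣ ↑(Int.gcd (A + (i:ℤ)) (B + (j:ℤ))) :=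
      Int.gcd_dvd_left _ _
    have hpinner : (p:ℤ) ∣ ↑(Int.gcd (A + (i:ℤ)) (B + (j:ℤ))) :=
      dvd_trans (by exact_mod_cast hpg) hginner
    exact ⟨p, hpPF, dvd_trans hpinner (Int.gcd_dvd_left _ _),
      dvd_trans hpinner (Int.gcd_dvd_right _ _)⟩
  -- counting
  have hsub : (Finset.range K) ×ˢ (Finset.range K) ⊆
      PF.biUnion (fun p => ((Finset.range K).filter (fun i : ℕ => (p:ℤ) ∣ A + (i:ℤ))) ×ˢ
        ((Finset.range K).filter (fun j : ℕ => (p:ℤ) ∣ B + (j:ℤ)))) := by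
    intro q hq
    obtain ⟨p, hp, h1, h2⟩ := hbad q hq
    simp only [Finset.mem_product] at hq
    exact Finset.mem_biUnion.2 ⟨p, hp, Finset.mem_product.2
      ⟨Finset.mem_filter.2 ⟨hq.1, h1⟩, Finset.mem_filter.2 ⟨hq.2, h2⟩⟩⟩
  have htwo : ∀ p ∈ PF, 2 ≤ p := fun p hp => (Nat.prime_of_mem_primeFactors hp).two_le
  have hKK : K * K ≤ ∑ p ∈ PF, (K/p + 1)^2 := by
    calc K * K = ((Finset.range K) ×ˢ (Finset.range K)).card := by
          simp [Finset.card_product]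
      _ ≤ _ := Finset.card_le_card hsub
      _ ≤ ∑ p ∈ PF, (((Finset.range K).filter (fun i : ℕ => (p:ℤ) ∣ A + (i:ℤ))) ×ˢ
            ((Finset.range K).filter (fun j : ℕ => (p:ℤ) ∣ B + (j:ℤ)))).card :=
          Finset.card_biUnion_le
      _ ≤ ∑ p ∈ PF, (K/p + 1)^2 := by
          apply Finset.sum_le_sum
          intro p hp
          rw [Finset.card_product, sq]
          exact Nat.mul_le_mul (count_residue K p (by have := htwo p hp; omega) A)
            (count_residue K p (by have := htwo p hp; omega) B)
  -- real estimates
  have hcast : ((K:ℝ))^2 ≤ ∑ p ∈ PF, ((K:ℝ)/(p:ℝ) + 1)^2 := by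
    calc ((K:ℝ))^2 = ((K * K : ℕ) : ℝ) := by push_cast; ring
      _ ≤ ((∑ p ∈ PF, (K/p + 1)^2 : ℕ) : ℝ) := by exact_mod_cast hKK
      _ = ∑ p ∈ PF, (((K/p + 1 : ℕ)) : ℝ)^2 := by push_cast; rfl
      _ ≤ ∑ p ∈ PF, ((K:ℝ)/(p:ℝ) + 1)^2 := by
          apply Finset.sum_le_sum
          intro p hp
          have h1 : (((K/p : ℕ)) : ℝ) ≤ (K:ℝ)/(p:ℝ) := Nat.cast_div_le
          have h2 : (0:ℝ) ≤ ((K/p + 1 : ℕ) : ℝ) := by positivity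
          have h3 : (((K/p + 1 : ℕ)) : ℝ) ≤ (K:ℝ)/(p:ℝ) + 1 := by push_cast; linarith
          nlinarith
  have hsum := sum_inv_sq_le ω PF rfl htwo
  have hexp : ∑ p ∈ PF, ((K:ℝ)/(p:ℝ) + 1)^2 ≤
      (K:ℝ)^2 * (1 - 1/((ω:ℝ)+1)) + (ω:ℝ) * ((K:ℝ) + 1) := by
    have step : ∀ p ∈ PF, ((K:ℝ)/(p:ℝ) + 1)^2 ≤ (K:ℝ)^2 * ((1:ℝ)/(p:ℝ)^2) + ((K:ℝ) + 1) := by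
      intro p hp
      have hp2 : (2:ℝ) ≤ (p:ℝ) := by exact_mod_cast htwo p hp
      have hppos : (0:ℝ) < (p:ℝ) := by linarith
      have hKnn : (0:ℝ) ≤ (K:ℝ) := Nat.cast_nonneg _
      have e : ((K:ℝ)/(p:ℝ) + 1)^2 = (K:ℝ)^2 * ((1:ℝ)/(p:ℝ)^2) + 2*((K:ℝ)/(p:ℝ)) + 1 := by
        field_simp
        ring
      rw [e]
      have : 2*((K:ℝ)/(p:ℝ)) ≤ (K:ℝ) := by
        rw [mul_div_assoc', div_le_iff₀ hppos]
        nlinarith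
      linarith
    calc ∑ p ∈ PF, ((K:ℝ)/(p:ℝ) + 1)^2
        ≤ ∑ p ∈ PF, ((K:ℝ)^2 * ((1:ℝ)/(p:ℝ)^2) + ((K:ℝ) + 1)) := Finset.sum_le_sum step
      _ = (K:ℝ)^2 * (∑ p ∈ PF, (1:ℝ)/(p:ℝ)^2) + (ω:ℝ) * ((K:ℝ) + 1) := by
          rw [Finset.sum_add_distrib, ← Finset.mul_sum, Finset.sum_const, hω]
          ring_nf
      _ ≤ (K:ℝ)^2 * (1 - 1/((ω:ℝ)+1)) + (ω:ℝ) * ((K:ℝ) + 1) := by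
          have hK2 : (0:ℝ) ≤ (K:ℝ)^2 := sq_nonneg _
          nlinarith
  -- final contradiction
  have hKval : (K:ℝ) = 2 * ((ω:ℝ)+1)^2 := by
    rw [hKdef]
    show ((2 * (n.primeFactors.card + 1)^2 : ℕ) : ℝ) = _
    push_cast
    rfl
  have hωnn : (0:ℝ) ≤ (ω:ℝ) := Nat.cast_nonneg _
  have hωpos : (0:ℝ) < (ω:ℝ) + 1 := by linarith
  have key : (K:ℝ)^2 * (1/((ω:ℝ)+1)) > (ω:ℝ) * ((K:ℝ) + 1) := by
    rw [hKval]
    rw [gt_iff_lt, ← sub_pos]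
    have e : (2 * ((ω:ℝ)+1)^2)^2 * (1/((ω:ℝ)+1)) - (ω:ℝ) * ((2 * ((ω:ℝ)+1)^2) + 1)
        = (4*((ω:ℝ)+1)^3 - 2*(ω:ℝ)*((ω:ℝ)+1)^2 - (ω:ℝ)) := by
      field_simp
      ring
    rw [e]
    nlinarith
  linarith

lemma growth (ε : ℝ) (hε : 0 < ε) : ∃ N : ℕ, 1 ≤ N ∧ ∀ n : ℕ, N ≤ n → (KK n : ℝ) ≤ ε * n := by
  have ht := tendsto_pow_const_div_const_pow_of_one_lt 2 (show (1:ℝ) < 2 by norm_num)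
  have hev := ht.eventually_lt_const (by positivity : (0:ℝ) < ε/8)
  obtain ⟨W, hW⟩ := Filter.eventually_atTop.mp hev
  refine ⟨max 1 (Nat.ceil (2*((W:ℝ)+1)^2/ε)), le_max_left _ _, ?_⟩
  intro n hn
  set ω := n.primeFactors.card with hω
  have hn1 : 1 ≤ n := le_trans (le_max_left _ _) hn
  have hnpos : (0:ℝ) < n := by exact_mod_cast hn1
  have hpow : (2:ℝ)^ω ≤ (n:ℝ) := by
    have h1 : 2^ω ≤ ∏ p ∈ n.primeFactors, p :=
      Finset.pow_card_le_prod _ _ _ (fun p hp => (Nat.prime_of_mem_primeFactors hp).two_le)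
    have h2 : (∏ p ∈ n.primeFactors, p) ≤ n :=
      Nat.le_of_dvd (by omega) (Nat.prod_primeFactors_dvd n)
    exact_mod_cast h1.trans h2
  have hKval : (KK n : ℝ) = 2*((ω:ℝ)+1)^2 := by
    show ((2 * (n.primeFactors.card + 1)^2 : ℕ) : ℝ) = _
    push_cast
    rfl
  rw [hKval]
  by_cases hcase : W ≤ ω + 1
  · have h := hW (ω+1) hcase
    have h2pos : (0:ℝ) < 2^(ω+1) := by positivity
    rw [div_lt_iff₀ h2pos] at h
    have hc : (((ω+1:ℕ)):ℝ) = (ω:ℝ)+1 := by push_cast; ring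
    rw [hc] at h
    have he : (2:ℝ)^(ω+1) = 2*2^ω := by ring
    rw [he] at h
    nlinarith
  · push_neg at hcase
    have hωW : (ω:ℝ)+1 ≤ (W:ℝ) := by exact_mod_cast hcase.le
    have hle : 2*((ω:ℝ)+1)^2 ≤ 2*((W:ℝ)+1)^2 := by nlinarith [Nat.cast_nonneg (α := ℝ) ω]
    have hNle : 2*((W:ℝ)+1)^2/ε ≤ (n:ℝ) := by
      refine le_trans (Nat.le_ceil _) ?_
      exact_mod_cast le_trans (le_max_right 1 _) hn
    rw [div_le_iff₀ hε] at hNle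
    nlinarith

/-- dist on AddCircle 1 is bounded by the real distance of lifts -/
lemma addCircle_dist_le (u w : ℝ) :
    dist ((u : AddCircle (1:ℝ))) ((w : AddCircle (1:ℝ))) ≤ |u - w| := by
  rw [dist_eq_norm, ← AddCircle.coe_sub]
  calc ‖((u - w : ℝ) : AddCircle (1:ℝ))‖ ≤ ‖u - w‖ := QuotientAddGroup.norm_mk_le_norm
    _ = |u - w| := Real.norm_eq_abs _

lemma coord_dist (n : ℕ) (hn : 1 ≤ n) (u : ℝ) (i : ℕ) (hi : i < KK n) :
    |u - ((Int.floor ((n:ℝ)*u) + (i:ℤ) : ℤ) : ℝ)/(n:ℝ)| ≤ (KK n : ℝ)/(n:ℝ) := by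
  have hnpos : (0:ℝ) < n := by exact_mod_cast hn
  have hfl := Int.floor_le ((n:ℝ)*u)
  have hlt := Int.lt_floor_add_one ((n:ℝ)*u)
  have hiK : (i:ℝ) ≤ (KK n : ℝ) - 1 := by
    have : (i:ℝ) + 1 ≤ (KK n : ℝ) := by exact_mod_cast hi
    linarith
  have hK2 : (2:ℝ) ≤ (KK n : ℝ) := by
    have : 2 ≤ KK n := by
      unfold KK
      nlinarith [Nat.zero_le (n.primeFactors.card)]
    exact_mod_cast this
  have hinn : (0:ℝ) ≤ (i:ℝ) := Nat.cast_nonneg _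
  have he : u - ((Int.floor ((n:ℝ)*u) + (i:ℤ) : ℤ) : ℝ)/(n:ℝ)
      = ((n:ℝ)*u - ((Int.floor ((n:ℝ)*u) : ℝ) + (i:ℝ)))/(n:ℝ) := by
    push_cast
    field_simp
  rw [he, abs_div, abs_of_pos hnpos]
  have habs : |(n:ℝ)*u - ((Int.floor ((n:ℝ)*u) : ℝ) + (i:ℝ))| ≤ (KK n : ℝ) := by
    rw [abs_le]
    constructor <;> nlinarith
  gcongr

/-- For every `ε > 0`, for all sufficiently large `n`, the set
`O_n = {(a/n, b/n) mod 1 : gcd(a,b,n) = 1}` is `ε`-dense in the torus. -/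
theorem stmt2 (ε : ℝ) (hε : 0 < ε) :
    ∃ N : ℕ, ∀ n : ℕ, N ≤ n →
      ∀ x : AddCircle (1 : ℝ) × AddCircle (1 : ℝ),
        ∃ a b : ℤ, Int.gcd (Int.gcd a b) n = 1 ∧
          dist x ((((a : ℝ) / n : ℝ), (((b : ℝ) / n : ℝ) : AddCircle (1 : ℝ))) :
            AddCircle (1 : ℝ) × AddCircle (1 : ℝ)) ≤ ε := by
  obtain ⟨N, hN1, hN⟩ := growth ε hε
  refine ⟨N, ?_⟩
  intro n hn x
  have hn1 : 1 ≤ n := hN1.trans hn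
  have hnpos : (0:ℝ) < n := by exact_mod_cast hn1
  obtain ⟨u, hu⟩ := QuotientAddGroup.mk_surjective x.1
  obtain ⟨v, hv⟩ := QuotientAddGroup.mk_surjective x.2
  set A := Int.floor ((n:ℝ)*u) with hA
  set B := Int.floor ((n:ℝ)*v) with hB
  obtain ⟨i, j, hi, hj, hgcd⟩ := exists_good n hn1 A B
  refine ⟨A + (i:ℤ), B + (j:ℤ), hgcd, ?_⟩
  have hKn : (KK n : ℝ)/(n:ℝ) ≤ ε := by
    rw [div_le_iff₀ hnpos]
    exact hN n hn
  have hx : x = ((u : AddCircle (1:ℝ)), (v : AddCircle (1:ℝ))) := by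
    rw [Prod.ext_iff]
    exact ⟨hu.symm, hv.symm⟩
  rw [hx, Prod.dist_eq]
  apply max_le
  · exact le_trans (addCircle_dist_le u _) (le_trans (coord_dist n hn1 u i hi) hKn)
  · exact le_trans (addCircle_dist_le v _) (le_trans (coord_dist n hn1 v j hj) hKn)
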